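/- The forcing R is σ-closed: for every sequence ⟨r_n : n ∈ ℕ⟩ of conditions in R with r_{n+1} ≤_R r_n for all n, there exists a condition r ∈ R with r ≤_R r_n for all n; indeed the coordinatewise union r = ((⋃_n A_{r_n}, ⋃_n <_{r_n}), ⋃_n B_{r_n}, ⋃_n C_{r_n}, ⋃_n F_{r_n}) is such a condition. -/
import Mathlib


open Cardinal Set

noncomputable section

/-- A partial function from ordinals to ordinals, represented by its graph. -/
abbrev ColFun := Set (Ordinal × Ordinal)

/-- `q ∈ Col(X)`: `q` is (the graph of) a function whose domain is an ordinal `< ω₁`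
and whose range is a subset of `X`. -/
def IsColFun (X : Set Ordinal) (q : ColFun) : Prop :=
  (∀ a b b', (a, b) ∈ q → (a, b') ∈ q → b = b') ∧
  (∃ δ : Ordinal, δ < (aleph 1).ord ∧ ∀ a : Ordinal, (∃ b, (a, b) ∈ q) ↔ a < δ) ∧
  (∀ a b, (a, b) ∈ q → b ∈ X)

/-- A quadruple `((A, <), B, C, F)`; `F` is a partial function represented by its graph. -/
structure Quad where
  A : Set Ordinal
  lt : Ordinal → Ordinal → Prop
  B : Set (Ordinal × ColFun)
  C : Set (ℕ → Ordinal)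
  F : Set ((ℕ → Ordinal) × (Ordinal × ColFun) × ℕ)

namespace Quad

/-- `x ≤ᵣ y`. -/
def leR (r : Quad) (x y : Ordinal) : Prop := r.lt x y ∨ x = y

/-- `x ⊥ᵣ y`: no `z ∈ Aᵣ` with `z ≤ᵣ x` and `z ≤ᵣ y`. -/
def Incomp (r : Quad) (x y : Ordinal) : Prop := ¬ ∃ z ∈ r.A, r.leR z x ∧ r.leR z y

/-- `r` is a forcing condition. -/
def IsCond (r : Quad) : Prop :=
  -- (1) A is a countable set of ordinals < ω₂
  r.A.Countable ∧
  (∀ a ∈ r.A, a < (aleph 2).ord) ∧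
  -- (2) <ᵣ is a strict partial order on A
  (∀ a b, r.lt a b → a ∈ r.A ∧ b ∈ r.A) ∧
  (∀ a b c, r.lt a b → r.lt b c → r.lt a c) ∧
  -- (3) b <ᵣ a implies a < b (whence <ᵣ is irreflexive and asymmetric)
  (∀ a b, r.lt b a → a < b) ∧
  -- (4) B is a countable subset of A × Col(A) with p ∈ range q for (p,q) ∈ B
  r.B.Countable ∧
  (∀ pq ∈ r.B, pq.1 ∈ r.A ∧ IsColFun r.A pq.2 ∧ ∃ α, (α, pq.1) ∈ pq.2) ∧
  -- (5) C is a countable set of <ᵣ-descending sequences in A without lower bound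
  r.C.Countable ∧
  (∀ a ∈ r.C, (∀ n, a n ∈ r.A) ∧ (∀ n, r.lt (a (n + 1)) (a n)) ∧
    ¬ ∃ z ∈ r.A, ∀ n, r.leR z (a n)) ∧
  -- (6) F is a (partial) function whose domain consists exactly of the pairs
  -- (⟨aₙ⟩, (p,q)) with ⟨aₙ⟩ ∈ C, (p,q) ∈ B, p ≥ a₀, satisfying (*)
  (∀ x ∈ r.F, x.1 ∈ r.C ∧ x.2.1 ∈ r.B ∧ x.1 0 ≤ x.2.1.1) ∧
  (∀ a pq, a ∈ r.C → pq ∈ r.B → a 0 ≤ pq.1 → ∃! m : ℕ, (a, pq, m) ∈ r.F) ∧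
  (∀ a pq m, (a, pq, m) ∈ r.F →
    ∀ p'q' ∈ r.B, r.leR p'q'.1 pq.1 → pq.2 ⊆ p'q'.2 →
      r.lt p'q'.1 (a m) → ∃ k, r.Incomp p'q'.1 (a k))

/-- `Ext r s`: `r ≤_R s`, i.e. `r` is stronger than `s`. -/
def Ext (r s : Quad) : Prop :=
  s.A ⊆ r.A ∧
  (∀ a ∈ s.A, ∀ b ∈ s.A, (r.lt a b ↔ s.lt a b)) ∧
  (∀ a ∈ s.A, ∀ b ∈ s.A, (r.Incomp a b ↔ s.Incomp a b)) ∧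
  s.B ⊆ r.B ∧ s.C ⊆ r.C ∧ s.F ⊆ r.F

end Quad

open Quad in
private lemma ext_refl' (s : Quad) : Ext s s :=
  ⟨subset_rfl, fun _ _ _ _ => Iff.rfl, fun _ _ _ _ => Iff.rfl,
    subset_rfl, subset_rfl, subset_rfl⟩

open Quad in
private lemma ext_trans' {a b c : Quad} (hab : Ext a b) (hbc : Ext b c) : Ext a c := by
  obtain ⟨h1, h2, h3, h4, h5, h6⟩ := hab
  obtain ⟨g1, g2, g3, g4, g5, g6⟩ := hbc
  exact ⟨g1.trans h1,
    fun x hx y hy => (h2 x (g1 hx) y (g1 hy)).trans (g2 x hx y hy),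
    fun x hx y hy => (h3 x (g1 hx) y (g1 hy)).trans (g3 x hx y hy),
    g4.trans h4, g5.trans h5, g6.trans h6⟩

private lemma colfun_mono {X Y : Set Ordinal} {q : ColFun} (hXY : X ⊆ Y)
    (h : IsColFun X q) : IsColFun Y q := by
  obtain ⟨h1, h2, h3⟩ := h
  exact ⟨h1, h2, fun a b hab => hXY (h3 a b hab)⟩

open Quad in
/-- The forcing `R` is σ-closed; indeed the coordinatewise union of a descending
sequence of conditions is a condition stronger than every term of the sequence. -/
theorem stmt0 (r : ℕ → Quad) (hcond : ∀ n, (r n).IsCond)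
    (hdec : ∀ n, Ext (r (n + 1)) (r n)) :
    (∃ t : Quad, t.IsCond ∧ ∀ n, Ext t (r n)) ∧
    (Quad.mk (⋃ n, (r n).A) (fun x y => ∃ n, (r n).lt x y)
        (⋃ n, (r n).B) (⋃ n, (r n).C) (⋃ n, (r n).F)).IsCond ∧
    (∀ n, Ext (Quad.mk (⋃ n, (r n).A) (fun x y => ∃ n, (r n).lt x y)
        (⋃ n, (r n).B) (⋃ n, (r n).C) (⋃ n, (r n).F)) (r n)) := by
  classical
  have hmono : ∀ m n, n ≤ m → Ext (r m) (r n) := by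
    intro m
    induction m with
    | zero => intro n h; obtain rfl := Nat.le_zero.mp h; exact ext_refl' _
    | succ k ih =>
      intro n h
      rcases eq_or_lt_of_le h with rfl | h'
      · exact ext_refl' _
      · exact ext_trans' (hdec k) (ih n (Nat.lt_succ_iff.mp h'))
  set t : Quad := ⟨⋃ n, (r n).A, fun x y => ∃ n, (r n).lt x y,
      ⋃ n, (r n).B, ⋃ n, (r n).C, ⋃ n, (r n).F⟩ with ht
  have hAi : ∀ n {x : Ordinal}, x ∈ (r n).A → x ∈ t.A :=
    fun n {x} hx => mem_iUnion.mpr ⟨n, hx⟩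
  have hltA : ∀ {n x y}, (r n).lt x y → x ∈ (r n).A ∧ y ∈ (r n).A :=
    fun {n x y} h => (hcond n).2.2.1 x y h
  have hlt_up : ∀ {n m x y}, n ≤ m → (r n).lt x y → (r m).lt x y := by
    intro n m x y h hxy
    exact ((hmono m n h).2.1 x (hltA hxy).1 y (hltA hxy).2).mpr hxy
  have hlt_agree : ∀ {n x y}, x ∈ (r n).A → y ∈ (r n).A →
      (t.lt x y ↔ (r n).lt x y) := by
    intro n x y hx hy
    constructor
    · rintro ⟨j, hj⟩
      have hK := hlt_up (le_max_left j n) hj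
      exact ((hmono (max j n) n (le_max_right j n)).2.1 x hx y hy).mp hK
    · intro h; exact ⟨n, h⟩
  have hleR_agree : ∀ {n x y}, x ∈ (r n).A → y ∈ (r n).A →
      (t.leR x y ↔ (r n).leR x y) := by
    intro n x y hx hy
    unfold Quad.leR
    exact or_congr_left (hlt_agree hx hy)
  have hInc_agree : ∀ {n x y}, x ∈ (r n).A → y ∈ (r n).A →
      (t.Incomp x y ↔ (r n).Incomp x y) := by
    intro n x y hx hy
    constructor
    · intro h
      rintro ⟨z, hz, hzx, hzy⟩
      exact h ⟨z, hAi n hz, (hleR_agree hz hx).mpr hzx, (hleR_agree hz hy).mpr hzy⟩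
    · intro h
      rintro ⟨z, hz, hzx, hzy⟩
      obtain ⟨j, hzj⟩ := mem_iUnion.mp hz
      have hzK : z ∈ (r (max j n)).A := (hmono (max j n) j (le_max_left j n)).1 hzj
      have hxK : x ∈ (r (max j n)).A := (hmono (max j n) n (le_max_right j n)).1 hx
      have hyK : y ∈ (r (max j n)).A := (hmono (max j n) n (le_max_right j n)).1 hy
      have hnot : ¬ (r (max j n)).Incomp x y := fun hc =>
        hc ⟨z, hzK, (hleR_agree hzK hxK).mp hzx, (hleR_agree hzK hyK).mp hzy⟩
      exact hnot (((hmono (max j n) n (le_max_right j n)).2.2.1 x hx y hy).mpr h)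
  have hc : t.IsCond := by
    refine ⟨?_, ?_, ?_, ?_, ?_, ?_, ?_, ?_, ?_, ?_, ?_, ?_⟩
    · exact countable_iUnion fun n => (hcond n).1
    · intro a ha
      obtain ⟨n, hn⟩ := mem_iUnion.mp ha
      exact (hcond n).2.1 a hn
    · rintro a b ⟨n, h⟩
      exact ⟨hAi n (hltA h).1, hAi n (hltA h).2⟩
    · rintro a b c ⟨n, hab⟩ ⟨m, hbc⟩
      exact ⟨max n m, (hcond (max n m)).2.2.2.1 a b c
        (hlt_up (le_max_left n m) hab) (hlt_up (le_max_right n m) hbc)⟩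
    · rintro a b ⟨n, h⟩
      exact (hcond n).2.2.2.2.1 a b h
    · exact countable_iUnion fun n => (hcond n).2.2.2.2.2.1
    · intro pq hpq
      obtain ⟨n, hn⟩ := mem_iUnion.mp hpq
      obtain ⟨h1, h2, h3⟩ := (hcond n).2.2.2.2.2.2.1 pq hn
      exact ⟨hAi n h1, colfun_mono (fun x hx => hAi n hx) h2, h3⟩
    · exact countable_iUnion fun n => (hcond n).2.2.2.2.2.2.2.1
    · intro a ha
      obtain ⟨n, hn⟩ := mem_iUnion.mp ha
      obtain ⟨h1, h2, h3⟩ := (hcond n).2.2.2.2.2.2.2.2.1 a hn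
      refine ⟨fun k => hAi n (h1 k), fun k => ⟨n, h2 k⟩, ?_⟩
      rintro ⟨z, hz, hzb⟩
      obtain ⟨j, hzj⟩ := mem_iUnion.mp hz
      have hzK : z ∈ (r (max j n)).A := (hmono (max j n) j (le_max_left j n)).1 hzj
      have haK : a ∈ (r (max j n)).C :=
        (hmono (max j n) n (le_max_right j n)).2.2.2.2.1 hn
      have hak : ∀ k, a k ∈ (r (max j n)).A :=
        fun k => (hmono (max j n) n (le_max_right j n)).1 (h1 k)
      have hzb' : ∀ k, (r (max j n)).leR z (a k) :=
        fun k => (hleR_agree hzK (hak k)).mp (hzb k)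
      exact ((hcond (max j n)).2.2.2.2.2.2.2.2.1 a haK).2.2 ⟨z, hzK, hzb'⟩
    · intro x hx
      obtain ⟨n, hn⟩ := mem_iUnion.mp hx
      obtain ⟨h1, h2, h3⟩ := (hcond n).2.2.2.2.2.2.2.2.2.1 x hn
      exact ⟨mem_iUnion.mpr ⟨n, h1⟩, mem_iUnion.mpr ⟨n, h2⟩, h3⟩
    · intro a pq ha hpq h0
      obtain ⟨n, han⟩ := mem_iUnion.mp ha
      obtain ⟨m, hpqm⟩ := mem_iUnion.mp hpq
      have haK : a ∈ (r (max n m)).C :=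
        (hmono (max n m) n (le_max_left n m)).2.2.2.2.1 han
      have hpqK : pq ∈ (r (max n m)).B :=
        (hmono (max n m) m (le_max_right n m)).2.2.2.1 hpqm
      obtain ⟨mm, hmm, -⟩ := (hcond (max n m)).2.2.2.2.2.2.2.2.2.2.1 a pq haK hpqK h0
      refine ⟨mm, mem_iUnion.mpr ⟨max n m, hmm⟩, ?_⟩
      intro y hy
      obtain ⟨j, hj⟩ := mem_iUnion.mp hy
      have h1 : (a, pq, y) ∈ (r (max j (max n m))).F :=
        (hmono (max j (max n m)) j (le_max_left _ _)).2.2.2.2.2 hj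
      have h2 : (a, pq, mm) ∈ (r (max j (max n m))).F :=
        (hmono (max j (max n m)) (max n m) (le_max_right _ _)).2.2.2.2.2 hmm
      have haL : a ∈ (r (max j (max n m))).C :=
        (hmono (max j (max n m)) (max n m) (le_max_right _ _)).2.2.2.2.1 haK
      have hpqL : pq ∈ (r (max j (max n m))).B :=
        (hmono (max j (max n m)) (max n m) (le_max_right _ _)).2.2.2.1 hpqK
      obtain ⟨w, -, huL⟩ :=
        (hcond (max j (max n m))).2.2.2.2.2.2.2.2.2.2.1 a pq haL hpqL h0
      rw [huL y h1, huL mm h2]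
    · intro a pq m hm p'q' hp' hle hsub hlt
      obtain ⟨n, hn⟩ := mem_iUnion.mp hm
      obtain ⟨j, hj⟩ := mem_iUnion.mp hp'
      have hmK : (a, pq, m) ∈ (r (max n j)).F :=
        (hmono (max n j) n (le_max_left n j)).2.2.2.2.2 hn
      have hpK : p'q' ∈ (r (max n j)).B :=
        (hmono (max n j) j (le_max_right n j)).2.2.2.1 hj
      obtain ⟨haC, hpqB, -⟩ := (hcond (max n j)).2.2.2.2.2.2.2.2.2.1 _ hmK
      have hp1 : p'q'.1 ∈ (r (max n j)).A :=
        ((hcond (max n j)).2.2.2.2.2.2.1 p'q' hpK).1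
      have hpq1 : pq.1 ∈ (r (max n j)).A :=
        ((hcond (max n j)).2.2.2.2.2.2.1 pq hpqB).1
      have ham : a m ∈ (r (max n j)).A :=
        ((hcond (max n j)).2.2.2.2.2.2.2.2.1 a haC).1 m
      have hleK : (r (max n j)).leR p'q'.1 pq.1 := (hleR_agree hp1 hpq1).mp hle
      have hltK : (r (max n j)).lt p'q'.1 (a m) := (hlt_agree hp1 ham).mp hlt
      obtain ⟨k, hk⟩ := (hcond (max n j)).2.2.2.2.2.2.2.2.2.2.2 a pq m hmK
        p'q' hpK hleK hsub hltK
      have hak : a k ∈ (r (max n j)).A :=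
        ((hcond (max n j)).2.2.2.2.2.2.2.2.1 a haC).1 k
      exact ⟨k, (hInc_agree hp1 hak).mpr hk⟩
  have he : ∀ n, Ext t (r n) := by
    intro n
    exact ⟨fun x hx => hAi n hx, fun a ha b hb => hlt_agree ha hb,
      fun a ha b hb => hInc_agree ha hb,
      fun x hx => mem_iUnion.mpr ⟨n, hx⟩, fun x hx => mem_iUnion.mpr ⟨n, hx⟩,
      fun x hx => mem_iUnion.mpr ⟨n, hx⟩⟩
  exact ⟨⟨t, hc, he⟩, hc, he⟩
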